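/- Let A ⊂ ℝ^D be a closed set with positive reach τ_A > 0, and let B₁,…,B_k be finitely many closed balls, where B_i has radius r_i < τ_A for each i. If the intersection B₁ ∩ … ∩ B_k ∩ A is nonempty, then its reach satisfies τ_{B₁∩…∩B_k∩A} > min_{1≤i≤k} r_i. -/

import Mathlib

open Metric Set ENNReal

noncomputable section

abbrev Euc (D : ℕ) := EuclideanSpace ℝ (Fin D)

variable {D : ℕ}

/-- The medial axis of a set `A ⊆ ℝ^D`: points having at least two nearest points on `A`. -/
def medialAxis (A : Set (Euc D)) : Set (Euc D) :=
  {z | ∃ p ∈ A, ∃ q ∈ A, p ≠ q ∧ dist p z = Metric.infDist z A ∧ dist q z = Metric.infDist z A}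

/-- The reach of `A ⊆ ℝ^D` (with value `∞` when the medial axis is empty). -/
def reach (A : Set (Euc D)) : ℝ≥0∞ :=
  ⨅ z ∈ medialAxis A, ENNReal.ofReal (Metric.infDist z A)

set_option maxHeartbeats 1000000

lemma aux_nearest' (A : Set (Euc D)) (hA : IsClosed A) (hAne : A.Nonempty) (x : Euc D) :
    ∃ ξ ∈ A, dist x ξ = infDist x A := by
  obtain ⟨y, hy, h⟩ := hA.exists_infDist_eq_dist hAne x
  exact ⟨y, hy, h.symm⟩


lemma aux_parallelogram (w p q : Euc D) :
    dist w p ^ 2 + dist w q ^ 2 = 2 * dist w (midpoint ℝ p q) ^ 2 + dist p q ^ 2 / 2 := by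
  have h1 : w - midpoint ℝ p q + (2:ℝ)⁻¹ • (p - q) = w - q := by
    rw [midpoint_eq_smul_add, invOf_eq_inv]
    module
  have h2 : w - midpoint ℝ p q - (2:ℝ)⁻¹ • (p - q) = w - p := by
    rw [midpoint_eq_smul_add, invOf_eq_inv]
    module
  have hpl := parallelogram_law_with_norm ℝ (w - midpoint ℝ p q) ((2:ℝ)⁻¹ • (p - q))
  rw [h1, h2] at hpl
  have hn : ‖(2:ℝ)⁻¹ • (p - q)‖ = ‖p - q‖ / 2 := by
    rw [norm_smul]
    simp [norm_inv]
    ring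
  rw [hn] at hpl
  simp only [dist_eq_norm]
  nlinarith [hpl]


lemma aux_unique (A : Set (Euc D)) (hA : IsClosed A) (hAne : A.Nonempty) {x : Euc D}
    (hx : ENNReal.ofReal (infDist x A) < reach A) :
    ∃ ξ ∈ A, dist x ξ = infDist x A ∧ ∀ a ∈ A, dist x a = infDist x A → a = ξ := by
  obtain ⟨ξ, hξA, hξ⟩ := aux_nearest' A hA hAne x
  refine ⟨ξ, hξA, hξ, fun a haA ha => ?_⟩
  by_contra hne
  have hmem : x ∈ medialAxis A :=
    ⟨a, haA, ξ, hξA, hne, by rw [dist_comm]; exact ha, by rw [dist_comm]; exact hξ⟩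
  have hle : reach A ≤ ENNReal.ofReal (infDist x A) := iInf₂_le x hmem
  exact absurd (lt_of_lt_of_le hx hle) (lt_irrefl _)


lemma aux_unit_step {w ξ : Euc D} {ρ : ℝ} (hρ0 : 0 < ρ) (h : dist w ξ = ρ) (ε : ℝ) :
    dist (w + ε • (ρ⁻¹ • (w - ξ))) w = |ε| := by
  rw [dist_eq_norm, add_sub_cancel_left, norm_smul, norm_smul, Real.norm_eq_abs,
    Real.norm_eq_abs, ← dist_eq_norm, h, abs_of_pos (inv_pos.mpr hρ0)]
  field_simp


lemma aux_gain (A : Set (Euc D)) (hA : IsClosed A) (hAne : A.Nonempty)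
    {w ξ : Euc D} {ρ lam ε₀ : ℝ}
    (hρ : infDist w A = ρ) (hρ0 : 0 < ρ) (hξA : ξ ∈ A) (hξ : dist w ξ = ρ)
    (huniq : ∀ a ∈ A, dist w a = ρ → a = ξ)
    (hlam0 : 0 < lam) (hlam1 : lam < 1) (hε₀ : 0 < ε₀) :
    ∃ ε, 0 < ε ∧ ε ≤ ε₀ ∧ ρ + lam * ε ≤ infDist (w + ε • (ρ⁻¹ • (w - ξ))) A := by
  set η : ℝ := ρ * (1 - lam) / 2 with hη
  have hη0 : 0 < η := by rw [hη]; nlinarith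
  have hm : ∃ m : ℝ, ρ < m ∧ ∀ a ∈ A, dist w a < m → dist a ξ < η := by
    set K : Set (Euc D) := (A ∩ closedBall w (ρ + 1)) \ ball ξ η with hK
    have hKclosed : IsClosed K := ((hA.inter isClosed_closedBall).sdiff isOpen_ball)
    have hKcompact : IsCompact K := by
      apply Metric.isCompact_of_isClosed_isBounded hKclosed
      exact (isBounded_closedBall (x := w) (r := ρ + 1)).subset (fun a ha => ha.1.2)
    rcases eq_empty_or_nonempty K with hKe | hKne
    · refine ⟨ρ + 1, by linarith, fun a haA hda => ?_⟩
      by_contra hfar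
      have : a ∈ K := ⟨⟨haA, by simpa [mem_closedBall, dist_comm] using hda.le⟩,
        by simpa [mem_ball] using hfar⟩
      simp [hKe] at this
    · obtain ⟨a₀, ha₀K, ha₀min⟩ := hKcompact.exists_isMinOn hKne
        (f := fun a => dist w a) (continuous_const.dist continuous_id).continuousOn
      have ha₀A : a₀ ∈ A := ha₀K.1.1
      have ha₀far : ¬ (dist a₀ ξ < η) := by
        have := ha₀K.2
        simpa [mem_ball] using this
      have ha₀ρ : ρ ≤ dist w a₀ := by rw [← hρ]; exact infDist_le_dist_of_mem ha₀A
      have hρa₀ : ρ < dist w a₀ := by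
        rcases lt_or_eq_of_le ha₀ρ with h | h
        · exact h
        · exact absurd (by simp [← huniq a₀ ha₀A h.symm, hη0] : dist a₀ ξ < η) ha₀far
      refine ⟨min (dist w a₀) (ρ + 1), lt_min hρa₀ (by linarith), fun a haA hda => ?_⟩
      by_contra hfar
      have haK : a ∈ K := ⟨⟨haA, by
          have := lt_of_lt_of_le hda (min_le_right _ _)
          simpa [mem_closedBall, dist_comm] using this.le⟩,
        by simpa [mem_ball] using hfar⟩
      have h1 : dist w a₀ ≤ dist w a := ha₀min haK
      have h2 := lt_of_lt_of_le hda (min_le_left _ _)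
      linarith
  obtain ⟨m, hmρ, hmball⟩ := hm
  set ε : ℝ := min ε₀ ((m - ρ) / 3) with hε
  have hε0 : 0 < ε := lt_min hε₀ (by linarith)
  have hεm : ρ + 2 * ε < m := by
    have : ε ≤ (m - ρ) / 3 := min_le_right _ _
    linarith
  set u : Euc D := ρ⁻¹ • (w - ξ) with hu
  have hnwξ : ‖w - ξ‖ = ρ := by rw [← dist_eq_norm]; exact hξ
  have hnu : ‖u‖ = 1 := by
    rw [hu, norm_smul, hnwξ, Real.norm_eq_abs, abs_of_pos (inv_pos.mpr hρ0)]
    field_simp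
  set x : Euc D := w + ε • u with hx
  have hdxw : dist x w = ε := by
    rw [hx, dist_eq_norm]
    simp only [add_sub_cancel_left, norm_smul, hnu, Real.norm_eq_abs, abs_of_pos hε0, mul_one]
  obtain ⟨ξ', hξ'A, hξ'⟩ := aux_nearest' A hA hAne x
  have hinfx_le : infDist x A ≤ ρ + ε := by
    calc infDist x A ≤ infDist w A + dist x w := infDist_le_infDist_add_dist
    _ = ρ + ε := by rw [hρ, hdxw]
  have hwξ' : dist w ξ' < m := by
    calc dist w ξ' ≤ dist w x + dist x ξ' := dist_triangle _ _ _
    _ = ε + infDist x A := by rw [dist_comm w x, hdxw, hξ']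
    _ ≤ ε + (ρ + ε) := by linarith
    _ < m := by linarith
  have hξ'near : dist ξ' ξ < η := hmball ξ' hξ'A hwξ'
  have hlow : (ρ + lam * ε) ^ 2 ≤ dist x ξ' ^ 2 := by
    have hxsub : x - ξ' = (w - ξ') + ε • u := by rw [hx]; abel
    have hexp : ‖(w - ξ') + ε • u‖ ^ 2
        = ‖w - ξ'‖ ^ 2 + 2 * inner ℝ (w - ξ') (ε • u) + ‖ε • u‖ ^ 2 :=
      norm_add_sq_real _ _
    have hinner1 : (inner ℝ (w - ξ) u : ℝ) = ρ := by
      rw [hu, real_inner_smul_right, real_inner_self_eq_norm_sq, hnwξ]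
      field_simp
    have hinner2 : (inner ℝ (ξ - ξ') u : ℝ) ≥ -η := by
      have h1 := abs_real_inner_le_norm (ξ - ξ') u
      have hn : ‖ξ - ξ'‖ < η := by rw [← dist_eq_norm, dist_comm]; exact hξ'near
      rw [hnu, mul_one] at h1
      nlinarith [neg_abs_le (inner ℝ (ξ - ξ') u : ℝ)]
    have hinner : (inner ℝ (w - ξ') u : ℝ) ≥ ρ - η := by
      have hsplit : w - ξ' = (w - ξ) + (ξ - ξ') := by abel
      rw [hsplit, inner_add_left, hinner1]
      linarith
    have hnwξ' : ρ ≤ ‖w - ξ'‖ := by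
      rw [← dist_eq_norm, ← hρ]
      exact infDist_le_dist_of_mem hξ'A
    have hεu : ‖ε • u‖ = ε := by
      rw [norm_smul, hnu, Real.norm_eq_abs, abs_of_pos hε0, mul_one]
    have hinr : (inner ℝ (w - ξ') (ε • u) : ℝ) = ε * (inner ℝ (w - ξ') u : ℝ) :=
      real_inner_smul_right _ _ _
    rw [dist_eq_norm, hxsub, hexp, hεu, hinr]
    have h1 : ε * (inner ℝ (w - ξ') u : ℝ) ≥ ε * (ρ - η) :=
      mul_le_mul_of_nonneg_left hinner hε0.le
    have hρη : 0 < ρ - η := by rw [hη]; nlinarith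
    have h1' : ε * (inner ℝ (w - ξ') u : ℝ) ≥ ε * (ρ - ρ * (1 - lam) / 2) := by
      rw [← hη]; exact h1
    have hN0 : (0:ℝ) ≤ ‖w - ξ'‖ := norm_nonneg _
    nlinarith [sq_nonneg (‖w - ξ'‖ - ρ), h1', mul_pos hε0 hε0,
      mul_pos (mul_pos hρ0 hε0) (show (0:ℝ) < 1 - lam by linarith),
      mul_pos (mul_pos hε0 hε0) (show (0:ℝ) < 1 - lam^2 by nlinarith)]
  refine ⟨ε, hε0, min_le_left _ _, ?_⟩
  rw [← hξ']
  have hd0 : 0 ≤ dist x ξ' := dist_nonneg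
  have hpos : 0 ≤ ρ + lam * ε := by positivity
  exact (pow_le_pow_iff_left₀ hpos hd0 two_ne_zero).mp hlow

lemma aux_escape (A : Set (Euc D)) (hA : IsClosed A) (hAne : A.Nonempty)
    {τ₀ : ℝ} (hreach : ENNReal.ofReal τ₀ ≤ reach A)
    {o : Euc D} {s lam : ℝ}
    (hd : 0 < infDist o A) (hs : 0 < s) (hsτ : infDist o A + s < τ₀)
    (hlam0 : 0 < lam) (hlam1 : lam < 1) :
    ∃ w, dist w o ≤ s ∧ infDist o A + lam * s ≤ infDist w A := by
  have hτ0 : 0 < τ₀ := lt_of_le_of_lt (by positivity) hsτ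
  set F : Euc D → ℝ := fun y => infDist y A - lam * dist y o with hF
  have hFcont : Continuous F :=
    (continuous_infDist_pt A).sub (continuous_const.mul (continuous_id.dist continuous_const))
  obtain ⟨w, hwK, hwmax⟩ := (isCompact_closedBall o s).exists_isMaxOn
    ⟨o, mem_closedBall_self hs.le⟩ hFcont.continuousOn
  have hwF : infDist o A ≤ F w := by
    have := hwmax (mem_closedBall_self hs.le)
    simpa [hF, dist_self] using this
  have hwo : dist w o ≤ s := by simpa [mem_closedBall] using hwK
  rcases eq_or_lt_of_le hwo with heq | hlt
  · refine ⟨w, hwo, ?_⟩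
    have h2 : infDist o A ≤ infDist w A - lam * s := by
      have := hwF; simp only [hF] at this; rw [← heq]; exact this
    linarith
  · exfalso
    have hFw : infDist o A ≤ infDist w A - lam * dist w o := hwF
    have hρpos : 0 < infDist w A := by
      have h3 : 0 ≤ lam * dist w o := by positivity
      linarith
    have hρτ : infDist w A < τ₀ := by
      have h1 : infDist w A ≤ infDist o A + dist w o := infDist_le_infDist_add_dist
      linarith
    obtain ⟨ξ, hξA, hξd, hξu⟩ := aux_unique A hA hAne (x := w)
      (lt_of_lt_of_le ((ENNReal.ofReal_lt_ofReal_iff hτ0).mpr hρτ) hreach)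
    obtain ⟨ε, hε0, hεle, hεgain⟩ := aux_gain A hA hAne (w := w) (ξ := ξ)
      (ρ := infDist w A) (lam := (1 + lam)/2) (ε₀ := s - dist w o)
      rfl hρpos hξA hξd hξu (by linarith) (by linarith) (by linarith)
    set x := w + ε • ((infDist w A)⁻¹ • (w - ξ)) with hx
    have hdxw : dist x w = ε := by
      rw [hx, aux_unit_step hρpos hξd, abs_of_pos hε0]
    have hxK : x ∈ closedBall o s := by
      rw [mem_closedBall]
      calc dist x o ≤ dist x w + dist w o := dist_triangle _ _ _
      _ ≤ ε + dist w o := by rw [hdxw]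
      _ ≤ s := by linarith
    have hFx : F x ≤ F w := hwmax hxK
    have hdxo : dist x o ≤ dist w o + ε := by
      calc dist x o ≤ dist x w + dist w o := dist_triangle _ _ _
      _ = dist w o + ε := by rw [hdxw]; ring
    have : F w < F x := by
      simp only [hF]
      have h5 : lam * dist x o ≤ lam * (dist w o + ε) :=
        mul_le_mul_of_nonneg_left hdxo hlam0.le
      have h6 : infDist w A + (1 + lam)/2 * ε ≤ infDist x A := hεgain
      nlinarith
    linarith

lemma aux_key (A : Set (Euc D)) (hA : IsClosed A) (hAne : A.Nonempty)
    {τ₀ : ℝ} (hreach : ENNReal.ofReal τ₀ ≤ reach A) (hτ0 : 0 < τ₀)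
    {p q : Euc D} (hp : p ∈ A) (hq : q ∈ A) (hpq : dist p q / 2 < τ₀) :
    infDist (midpoint ℝ p q) A * (2 * τ₀ - infDist (midpoint ℝ p q) A) ≤ (dist p q / 2) ^ 2 := by
  set o := midpoint ℝ p q with ho
  set d₀ := infDist o A with hd₀
  set h := dist p q / 2 with hh
  have hh0 : 0 ≤ h := by rw [hh]; positivity
  have hd₀0 : 0 ≤ d₀ := infDist_nonneg
  have hd₀h : d₀ ≤ h := by
    have h1 : d₀ ≤ dist o p := infDist_le_dist_of_mem hp
    have h2 : dist o p = h := by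
      rw [ho, hh, dist_midpoint_left]
      norm_num
      ring
    linarith
  rcases eq_or_lt_of_le hd₀0 with heq | hd₀pos
  · rw [← heq]
    have : (0:ℝ) * (2 * τ₀ - 0) = 0 := by ring
    rw [this]
    positivity
  -- main step: for all 0 < s with d₀ + s < τ₀ and lam ∈ (0,1), (d₀ + lam*s)² ≤ s² + h²
  have hstep : ∀ s lam : ℝ, 0 < s → d₀ + s < τ₀ → 0 < lam → lam < 1 →
      (d₀ + lam * s) ^ 2 ≤ s ^ 2 + h ^ 2 := by
    intro s lam hs hsτ hlam0 hlam1
    obtain ⟨w, hwo, hwd⟩ := aux_escape A hA hAne hreach hd₀pos hs hsτ hlam0 hlam1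
    have hwp : d₀ + lam * s ≤ dist w p := le_trans hwd (infDist_le_dist_of_mem hp)
    have hwq : d₀ + lam * s ≤ dist w q := le_trans hwd (infDist_le_dist_of_mem hq)
    have hpar := aux_parallelogram w p q
    rw [← ho] at hpar
    have hwo2 : dist w o ^ 2 ≤ s ^ 2 := by
      have := dist_nonneg (x := w) (y := o)
      nlinarith
    have hpos : 0 ≤ d₀ + lam * s := by positivity
    nlinarith [hwp, hwq, hpar, hwo2, dist_nonneg (x := w) (y := p), dist_nonneg (x := w) (y := q)]
  -- pass to the limit s → τ₀ - d₀, lam → 1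
  have hτd : 0 < τ₀ - d₀ := by linarith [lt_of_le_of_lt hd₀h hpq]
  have hlim : τ₀ ^ 2 ≤ (τ₀ - d₀) ^ 2 + h ^ 2 := by
    set f : ℝ → ℝ := fun δ => (d₀ + (1 - δ) * (τ₀ - d₀ - δ)) ^ 2 with hf
    have hcont : Continuous f := by fun_prop
    have htend : Filter.Tendsto f (nhdsWithin 0 (Set.Ioi 0)) (nhds (τ₀ ^ 2)) := by
      have h0 : f 0 = τ₀ ^ 2 := by rw [hf]; ring_nf
      have := hcont.tendsto 0
      rw [h0] at this
      exact this.mono_left nhdsWithin_le_nhds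
    have hev : ∀ᶠ δ in nhdsWithin 0 (Set.Ioi 0), f δ ≤ (τ₀ - d₀) ^ 2 + h ^ 2 := by
      have hmem : Set.Ioo (0:ℝ) (min 1 (τ₀ - d₀)) ∈ nhdsWithin 0 (Set.Ioi 0) :=
        Ioo_mem_nhdsGT_of_mem (by constructor <;> simp [hτd, zero_lt_one] : (0:ℝ) ∈ Set.Ico 0 (min 1 (τ₀ - d₀)))
      filter_upwards [hmem] with δ hδ
      obtain ⟨hδ0, hδlt⟩ := hδ
      have hδ1 : δ < 1 := lt_of_lt_of_le hδlt (min_le_left _ _)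
      have hδτ : δ < τ₀ - d₀ := lt_of_lt_of_le hδlt (min_le_right _ _)
      have hs : 0 < τ₀ - d₀ - δ := by linarith
      have h1 : (d₀ + (1 - δ) * (τ₀ - d₀ - δ)) ^ 2 ≤ (τ₀ - d₀ - δ) ^ 2 + h ^ 2 :=
        hstep (τ₀ - d₀ - δ) (1 - δ) hs (by linarith) (by linarith) (by linarith)
      have h2 : (τ₀ - d₀ - δ) ^ 2 ≤ (τ₀ - d₀) ^ 2 := by nlinarith
      calc f δ = (d₀ + (1 - δ) * (τ₀ - d₀ - δ)) ^ 2 := rfl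
      _ ≤ (τ₀ - d₀ - δ) ^ 2 + h ^ 2 := h1
      _ ≤ (τ₀ - d₀) ^ 2 + h ^ 2 := by linarith
    exact le_of_tendsto htend hev
  nlinarith [hlim]

/-- Lemma `lem:geometry_reach_intersection_balls` (i).
If `A` is closed with reach `τ_A > 0` and `B₁, …, B_k` are finitely many closed balls of radii
`r_i < τ_A` such that `B₁ ∩ … ∩ B_k ∩ A ≠ ∅`, then
`τ_{B₁ ∩ … ∩ B_k ∩ A} > min_i r_i`. -/
theorem reach_inter_balls_finite (A : Set (Euc D)) (hA : IsClosed A) (h₀ : 0 < reach A)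
    (k : ℕ) (hk : 0 < k) (c : Fin k → Euc D) (r : Fin k → ℝ)
    (hr : ∀ i, ENNReal.ofReal (r i) < reach A)
    (hne : ((⋂ i, Metric.closedBall (c i) (r i)) ∩ A).Nonempty) :
    (⨅ i, ENNReal.ofReal (r i)) < reach ((⋂ i, Metric.closedBall (c i) (r i)) ∩ A) := by
  obtain ⟨x₀, hx₀B, hx₀A⟩ := hne
  have hAne : A.Nonempty := ⟨x₀, hx₀A⟩
  have hr0 : ∀ i, 0 ≤ r i := fun i => le_trans dist_nonneg (by
    simpa [mem_closedBall] using (mem_iInter.mp hx₀B i))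
  -- choose τ₀
  have hτexists : ∃ τ₀ : ℝ, 0 < τ₀ ∧ (∀ i, r i < τ₀) ∧ ENNReal.ofReal τ₀ ≤ reach A := by
    rcases eq_or_ne (reach A) ⊤ with htop | htop
    · have hFinNe : (Finset.univ : Finset (Fin k)).Nonempty := by
        simpa [Finset.univ_nonempty_iff] using Fin.pos_iff_nonempty.mp hk
      refine ⟨(Finset.univ.sup' hFinNe r) + 1, ?_, ?_, by simp [htop]⟩
      · have := Finset.le_sup' r (hFinNe.choose_spec)
        have h1 := hr0 hFinNe.choose
        linarith
      · intro i
        have := Finset.le_sup' r (Finset.mem_univ i)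
        linarith
    · refine ⟨(reach A).toReal, ?_, ?_, ?_⟩
      · exact ENNReal.toReal_pos h₀.ne' htop
      · intro i
        have h1 : ENNReal.ofReal (r i) < ENNReal.ofReal (reach A).toReal := by
          rw [ENNReal.ofReal_toReal htop]; exact hr i
        exact (ENNReal.ofReal_lt_ofReal_iff (ENNReal.toReal_pos h₀.ne' htop)).mp h1
      · rw [ENNReal.ofReal_toReal htop]
  obtain ⟨τ₀, hτ0, hτr, hτreach⟩ := hτexists
  set S : Set (Euc D) := (⋂ i, Metric.closedBall (c i) (r i)) ∩ A with hS
  -- it suffices to prove ofReal τ₀ ≤ reach S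
  have hmain : ENNReal.ofReal τ₀ ≤ reach S := by
    rw [reach]
    refine le_iInf₂ fun z hz => ?_
    refine ENNReal.ofReal_le_ofReal ?_
    -- the geometric heart
    obtain ⟨p, hpS, q, hqS, hpq, hdp, hdq⟩ := hz
    set d := infDist z S with hd
    have hpA : p ∈ A := hpS.2
    have hqA : q ∈ A := hqS.2
    have hpB : ∀ i, dist p (c i) ≤ r i := fun i => by
      simpa [mem_closedBall] using (mem_iInter.mp hpS.1 i)
    have hqB : ∀ i, dist q (c i) ≤ r i := fun i => by
      simpa [mem_closedBall] using (mem_iInter.mp hqS.1 i)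
    set h := dist p q / 2 with hh
    have hh0 : 0 < h := by
      rw [hh]
      have := dist_pos.mpr hpq
      linarith
    have hd0 : 0 < d := by
      rcases lt_or_eq_of_le (infDist_nonneg : 0 ≤ d) with h1 | h1
      · exact h1
      · exfalso
        have hp0 : dist p z = 0 := by rw [hdp, hd, ← h1]
        have hq0 : dist q z = 0 := by rw [hdq, hd, ← h1]
        exact hpq (by rw [dist_eq_zero.mp hp0, dist_eq_zero.mp hq0])
    set o := midpoint ℝ p q with ho
    have hop : dist o p = h := by rw [ho, hh, dist_midpoint_left]; norm_num; ring
    have hhr : ∀ i, h ≤ r i := fun i => by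
      have h1 : dist p q ≤ dist p (c i) + dist (c i) q := dist_triangle _ _ _
      have h2 := hpB i
      have h3 : dist (c i) q ≤ r i := by rw [dist_comm]; exact hqB i
      rw [hh]; linarith
    have hhτ : h < τ₀ := lt_of_le_of_lt (hhr ⟨0, hk⟩) (hτr _)
    set d₀ := infDist o A with hd₀
    have hd₀0 : 0 ≤ d₀ := infDist_nonneg
    have hd₀h : d₀ ≤ h := by
      rw [hd₀, ← hop]; exact infDist_le_dist_of_mem hpA
    have hkey : d₀ * (2 * τ₀ - d₀) ≤ h ^ 2 := by
      have := aux_key A hA hAne hτreach hτ0 hpA hqA (by rw [← hh]; exact hhτ)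
      rw [← ho, ← hd₀, ← hh] at this
      exact this
    -- nearest point of o lies in S
    obtain ⟨π, hπA, hπd⟩ := aux_nearest' A hA hAne o
    have hπS : π ∈ S := by
      refine ⟨mem_iInter.mpr fun i => ?_, hπA⟩
      rw [mem_closedBall]
      have hbi : dist o (c i) ^ 2 ≤ r i ^ 2 - h ^ 2 := by
        have hpar := aux_parallelogram (c i) p q
        rw [← ho] at hpar
        have h1 : dist (c i) p ≤ r i := by rw [dist_comm]; exact hpB i
        have h2 : dist (c i) q ≤ r i := by rw [dist_comm]; exact hqB i
        have h3 : dist (c i) o = dist o (c i) := dist_comm _ _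
        rw [h3] at hpar
        have h4 : (0:ℝ) ≤ dist (c i) p := dist_nonneg
        have h5 : (0:ℝ) ≤ dist (c i) q := dist_nonneg
        rw [hh]
        nlinarith
      have htri : dist π (c i) ≤ d₀ + dist o (c i) := by
        have := dist_triangle π o (c i)
        have hπo : dist π o = d₀ := by rw [dist_comm, hπd, hd₀]
        linarith
      have hrτ : r i ≤ τ₀ := (hτr i).le
      have hhri := hhr i
      have hbnd : dist o (c i) ≤ r i - d₀ := by
        have hb0 : (0:ℝ) ≤ dist o (c i) := dist_nonneg
        have hrd : 0 ≤ r i - d₀ := by linarith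
        nlinarith [hbi, hkey]
      linarith
    -- final computation
    have hdist_zo : dist z o ^ 2 = d ^ 2 - h ^ 2 := by
      have hpar := aux_parallelogram z p q
      rw [← ho] at hpar
      have h1 : dist z p = d := by rw [dist_comm]; exact hdp
      have h2 : dist z q = d := by rw [dist_comm]; exact hdq
      rw [h1, h2] at hpar
      have hP : dist p q = 2 * h := by rw [hh]; ring
      have hP2 : dist p q ^ 2 = 4 * h ^ 2 := by rw [hP]; ring
      linarith [hpar, hP2]
    have hzπ : d ≤ dist z o + d₀ := by
      have h1 : d ≤ dist z π := infDist_le_dist_of_mem hπS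
      have h2 : dist z π ≤ dist z o + dist o π := dist_triangle _ _ _
      rw [hπd, ← hd₀] at h2
      linarith
    set a := dist z o with ha
    have ha0 : 0 ≤ a := dist_nonneg
    have hda : a < d := by nlinarith [hdist_zo]
    have hx0 : 0 < d - a := by linarith
    have hxd₀ : d - a ≤ d₀ := by linarith
    have hmono : (d - a) * (2 * τ₀ - (d - a)) ≤ d₀ * (2 * τ₀ - d₀) := by
      nlinarith [mul_nonneg (sub_nonneg.mpr hxd₀)
        (show (0:ℝ) ≤ 2 * τ₀ - d₀ - (d - a) by nlinarith)]
    have hprod : h ^ 2 = (d - a) * (d + a) := by nlinarith [hdist_zo]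
    have hfin : (d - a) * (2 * τ₀ - (d - a)) ≤ (d - a) * (d + a) := by
      rw [← hprod]; exact le_trans hmono hkey
    have h7 : 2 * τ₀ - (d - a) ≤ d + a := (mul_le_mul_iff_right₀ hx0).mp hfin
    linarith
  -- conclude
  have hlt : (⨅ i, ENNReal.ofReal (r i)) < ENNReal.ofReal τ₀ := by
    refine lt_of_le_of_lt (iInf_le _ ⟨0, hk⟩) ?_
    rw [ENNReal.ofReal_lt_ofReal_iff hτ0]
    exact hτr _
  exact lt_of_lt_of_le hlt hmain

end
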